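/- The function Θ(x) = log Γ(x+1) − x·log x + x − (1/2)·log(2π) − (1/4)·log(x² + x/3 + 1/18) is strictly increasing on (0, ∞), with limit 0 as x → ∞. -/

import Mathlib

open Filter

noncomputable def Θ (x : ℝ) : ℝ :=
  Real.log (Real.Gamma (x + 1)) - x * Real.log x + x
    - (1/2) * Real.log (2 * Real.pi) - (1/4) * Real.log (x^2 + x/3 + 1/18)

open Real Topology


noncomputable def gg (t : ℝ) : ℝ :=
  t * (Real.log (t+1) - Real.log t) - 1
    + (1/4) * (Real.log (t^2 + 7*t/3 + 25/18) - Real.log (t^2 + t/3 + 1/18))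

lemma q0_pos (t : ℝ) : 0 < t^2 + t/3 + 1/18 := by nlinarith [sq_nonneg (t + 1/6)]
lemma q1_pos (t : ℝ) : 0 < t^2 + 7*t/3 + 25/18 := by nlinarith [sq_nonneg (t + 7/6)]

lemma log_lb {s : ℝ} (h0 : 0 ≤ s) (h1 : s < 1) :
    2*(s + s^3/3 + s^5/5) ≤ Real.log (1+s) - Real.log (1-s) := by
  set F : ℝ → ℝ := fun u => Real.log (1+u) - Real.log (1-u) - 2*(u + u^3/3 + u^5/5) with hF
  have key : ∀ u ∈ Set.Ico (0:ℝ) 1, HasDerivAt F (2*u^6/(1-u^2)) u := by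
    intro u hu
    obtain ⟨hu0, hu1⟩ := hu
    have h1u : (0:ℝ) < 1 + u := by linarith
    have h2u : (0:ℝ) < 1 - u := by linarith
    have d1 : HasDerivAt (fun u : ℝ => Real.log (1+u)) (1/(1+u)) u := by
      have := (Real.hasDerivAt_log h1u.ne').comp u ((hasDerivAt_id u).const_add 1)
      simpa [Function.comp_def] using this
    have d2 : HasDerivAt (fun u : ℝ => Real.log (1-u)) (-(1/(1-u))) u := by
      have := (Real.hasDerivAt_log h2u.ne').comp u ((hasDerivAt_id u).neg.const_add 1)
      simpa [Function.comp_def] using this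
    have d3 : HasDerivAt (fun u : ℝ => 2*(u + u^3/3 + u^5/5)) (2*(1 + u^2 + u^4)) u := by
      have : HasDerivAt (fun u : ℝ => u + u^3/3 + u^5/5) (1 + u^2 + u^4) u := by
        have h5 := (hasDerivAt_pow 5 u)
        have h3 := (hasDerivAt_pow 3 u)
        have := ((hasDerivAt_id u).fun_add (h3.div_const 3)).fun_add (h5.div_const 5)
        refine this.congr_deriv ?_
        push_cast
        ring
      simpa using this.const_mul 2
    have hne : (1:ℝ) - u^2 ≠ 0 := by nlinarith
    have := (d1.fun_sub d2).fun_sub d3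
    refine this.congr_deriv ?_
    field_simp
    ring
  have hmono : MonotoneOn F (Set.Ico (0:ℝ) 1) := by
    apply monotoneOn_of_deriv_nonneg (convex_Ico 0 1)
    · exact fun u hu => ((key u hu).continuousAt).continuousWithinAt
    · intro u hu
      rw [interior_Ico] at hu
      exact (key u (Set.Ioo_subset_Ico_self hu)).differentiableAt.differentiableWithinAt
    · intro u hu
      rw [interior_Ico] at hu
      rw [(key u (Set.Ioo_subset_Ico_self hu)).deriv]
      have : (0:ℝ) < 1 - u^2 := by nlinarith [hu.1, hu.2]
      positivity
  have h0' : F 0 = 0 := by simp [hF]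
  have := hmono (Set.mem_Ico.mpr ⟨le_refl 0, one_pos⟩) (Set.mem_Ico.mpr ⟨h0, h1⟩) h0
  rw [h0'] at this
  simp only [hF] at this
  linarith

noncomputable def GG (t : ℝ) : ℝ :=
  (Real.log (t+1) - Real.log t) - 1/(t+1)
    + (1/4) * ((2*t + 7/3)/(t^2 + 7*t/3 + 25/18) - (2*t + 1/3)/(t^2 + t/3 + 1/18))

lemma hasDerivAt_gg {t : ℝ} (ht : 0 < t) : HasDerivAt gg (GG t) t := by
  have ht1 : (0:ℝ) < t + 1 := by linarith
  have d1 : HasDerivAt (fun t : ℝ => Real.log (t+1)) (1/(t+1)) t := by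
    have := (Real.hasDerivAt_log ht1.ne').comp t ((hasDerivAt_id t).add_const 1)
    simpa [Function.comp_def] using this
  have d2 : HasDerivAt (fun t : ℝ => Real.log t) (1/t) t := by
    simpa [one_div] using Real.hasDerivAt_log ht.ne'
  have d3 : HasDerivAt (fun t : ℝ => t * (Real.log (t+1) - Real.log t))
      ((Real.log (t+1) - Real.log t) + t * (1/(t+1) - 1/t)) t := by
    have := (hasDerivAt_id t).fun_mul (d1.fun_sub d2)
    simpa [mul_comm] using this
  have dq1 : HasDerivAt (fun t : ℝ => t^2 + 7*t/3 + 25/18) (2*t + 7/3) t := by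
    have := ((hasDerivAt_pow 2 t).fun_add ((hasDerivAt_id t).const_mul 7 |>.div_const 3)).add_const (25/18)
    refine this.congr_deriv ?_
    push_cast; ring
  have dq0 : HasDerivAt (fun t : ℝ => t^2 + t/3 + 1/18) (2*t + 1/3) t := by
    have := ((hasDerivAt_pow 2 t).fun_add ((hasDerivAt_id t).div_const 3)).add_const (1/18)
    refine this.congr_deriv ?_
    push_cast; ring
  have d4 : HasDerivAt (fun t : ℝ => Real.log (t^2 + 7*t/3 + 25/18))
      ((2*t + 7/3)/(t^2 + 7*t/3 + 25/18)) t := by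
    have := (Real.hasDerivAt_log (q1_pos t).ne').comp t dq1
    simpa [div_eq_inv_mul, Function.comp_def] using this
  have d5 : HasDerivAt (fun t : ℝ => Real.log (t^2 + t/3 + 1/18))
      ((2*t + 1/3)/(t^2 + t/3 + 1/18)) t := by
    have := (Real.hasDerivAt_log (q0_pos t).ne').comp t dq0
    simpa [div_eq_inv_mul, Function.comp_def] using this
  have := (d3.sub_const 1).fun_add (((d4.fun_sub d5).const_mul (1/4)))
  refine this.congr_deriv ?_
  unfold GG
  have h1 : t * (1/(t+1) - 1/t) = -(1/(t+1)) := by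
    field_simp; ring
  rw [h1]; ring

lemma GG_pos {t : ℝ} (ht : 0 < t) : 0 < GG t := by
  set s : ℝ := 1/(2*t+1) with hs
  have h2t : (0:ℝ) < 2*t+1 := by linarith
  have hs0 : 0 ≤ s := by positivity
  have hs1 : s < 1 := by
    rw [hs, div_lt_one h2t]; linarith
  have hlog : Real.log (t+1) - Real.log t = Real.log (1+s) - Real.log (1-s) := by
    have e1 : 1 + s = (2*t+2)/(2*t+1) := by rw [hs]; field_simp; ring
    have e2 : 1 - s = (2*t)/(2*t+1) := by rw [hs]; field_simp; ring
    rw [e1, e2, Real.log_div (by linarith) h2t.ne', Real.log_div (by linarith) h2t.ne',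
      show (2*t+2 : ℝ) = 2*(t+1) by ring, Real.log_mul two_ne_zero (by linarith),
      Real.log_mul two_ne_zero ht.ne']
    ring
  have hlb := log_lb hs0 hs1
  rw [← hlog] at hlb
  have key : 2*(s + s^3/3 + s^5/5) - 1/(t+1)
      + (1/4) * ((2*t + 7/3)/(t^2 + 7*t/3 + 25/18) - (2*t + 1/3)/(t^2 + t/3 + 1/18))
      = (64/135*t^5 + 268/135*t^4 + 6827/2430*t^3 + 2198/1215*t^2 + 2657/4860*t + 37/486)
        / ((2*t+1)^5 * (t+1) * (t^2 + t/3 + 1/18) * (t^2 + 7*t/3 + 25/18)) := by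
    rw [hs]
    have h0 := (q0_pos t).ne'
    have h1 := (q1_pos t).ne'
    field_simp
    ring
  have hnum : 0 < 64/135*t^5 + 268/135*t^4 + 6827/2430*t^3 + 2198/1215*t^2 + 2657/4860*t + 37/486 := by
    positivity
  have hden : 0 < (2*t+1)^5 * (t+1) * (t^2 + t/3 + 1/18) * (t^2 + 7*t/3 + 25/18) := by
    have := q0_pos t; have := q1_pos t
    positivity
  have hpos : 0 < 2*(s + s^3/3 + s^5/5) - 1/(t+1)
      + (1/4) * ((2*t + 7/3)/(t^2 + 7*t/3 + 25/18) - (2*t + 1/3)/(t^2 + t/3 + 1/18)) := by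
    rw [key]; exact div_pos hnum hden
  unfold GG
  linarith

lemma gg_strictMonoOn : StrictMonoOn gg (Set.Ioi 0) := by
  apply strictMonoOn_of_deriv_pos (convex_Ioi 0)
  · exact fun t ht => (hasDerivAt_gg ht).continuousAt.continuousWithinAt
  · intro t ht
    rw [interior_Ioi] at ht
    rw [(hasDerivAt_gg ht).deriv]
    exact GG_pos ht

lemma theta_step {x : ℝ} (hx : 0 < x) : Θ (x + 1) = Θ x - gg x := by
  have hgpos : 0 < Real.Gamma (x + 1) := Real.Gamma_pos_of_pos (by linarith)
  have hrec : Real.Gamma (x + 1 + 1) = (x + 1) * Real.Gamma (x + 1) :=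
    Real.Gamma_add_one (by linarith : x + 1 ≠ 0)
  unfold Θ gg
  rw [hrec, Real.log_mul (by linarith : (x:ℝ)+1 ≠ 0) hgpos.ne',
    show (x+1)^2 + (x+1)/3 + 1/18 = x^2 + 7*x/3 + 25/18 by ring]
  ring

lemma theta_sum {x : ℝ} (hx : 0 < x) (N : ℕ) :
    Θ (x + N) = Θ x - ∑ n ∈ Finset.range N, gg (x + n) := by
  induction N with
  | zero => simp
  | succ N ih =>
    have hxN : 0 < x + N := by positivity
    have : Θ (x + (N+1 : ℕ)) = Θ ((x + N) + 1) := by push_cast; ring_nf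
    rw [this, theta_step hxN, ih, Finset.sum_range_succ]
    ring

lemma theta_nat_eq {n : ℕ} (hn : 1 ≤ n) :
    Θ n = (Real.log (Stirling.stirlingSeq n) - Real.log (Real.sqrt Real.pi))
      - (1/4) * Real.log (1 + 1/(3*(n:ℝ)) + 1/(18*(n:ℝ)^2)) := by
  have hn0 : (0:ℝ) < n := by exact_mod_cast hn
  have hfac : Real.log (Real.Gamma ((n:ℝ) + 1)) = Real.log (Nat.factorial n : ℝ) := by
    rw [Real.Gamma_nat_eq_factorial]
  have hstir := Stirling.log_stirlingSeq_formula n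
  have hlog_ne : (n:ℝ) / Real.exp 1 > 0 := by positivity
  have hqsplit : ((n:ℝ)^2 + (n:ℝ)/3 + 1/18)
      = (n:ℝ)^2 * (1 + 1/(3*(n:ℝ)) + 1/(18*(n:ℝ)^2)) := by
    field_simp
  have hqpos : (0:ℝ) < 1 + 1/(3*(n:ℝ)) + 1/(18*(n:ℝ)^2) := by positivity
  unfold Θ
  rw [hfac, hqsplit, Real.log_mul (by positivity) hqpos.ne', Real.log_pow,
    Real.log_mul two_ne_zero (Real.pi_pos.ne'), Real.log_sqrt Real.pi_pos.le]
  have h2n : Real.log (2 * (n:ℝ)) = Real.log 2 + Real.log n :=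
    Real.log_mul two_ne_zero hn0.ne'
  have hne : Real.log ((n:ℝ) / Real.exp 1) = Real.log n - 1 := by
    rw [Real.log_div hn0.ne' (Real.exp_ne_zero 1), Real.log_exp]
  have : Real.log (Nat.factorial n : ℝ)
      = Real.log (Stirling.stirlingSeq n) + 1/2 * Real.log (2*(n:ℝ)) + n * Real.log ((n:ℝ)/Real.exp 1) := by
    rw [hstir]; ring
  rw [this, h2n, hne]
  push_cast
  ring

lemma theta_nat_tendsto : Tendsto (fun n : ℕ => Θ n) atTop (𝓝 0) := by
  have hsp : (0:ℝ) < Real.sqrt Real.pi := Real.sqrt_pos.mpr Real.pi_pos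
  have T1 : Tendsto (fun n : ℕ => Real.log (Stirling.stirlingSeq n) - Real.log (Real.sqrt Real.pi))
      atTop (𝓝 0) := by
    have := ((Real.continuousAt_log hsp.ne').tendsto).comp Stirling.tendsto_stirlingSeq_sqrt_pi
    have := this.sub_const (Real.log (Real.sqrt Real.pi))
    simpa using this
  have hn : Tendsto (fun n : ℕ => (n:ℝ)) atTop atTop := tendsto_natCast_atTop_atTop
  have h1 : Tendsto (fun n : ℕ => 1/(3*(n:ℝ))) atTop (𝓝 0) := by
    have := (hn.const_mul_atTop (by norm_num : (0:ℝ) < 3)).inv_tendsto_atTop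
    simpa [Pi.inv_def, one_div, mul_inv, mul_comm] using this
  have h2 : Tendsto (fun n : ℕ => 1/(18*(n:ℝ)^2)) atTop (𝓝 0) := by
    have hp : Tendsto (fun n : ℕ => (n:ℝ)^2) atTop atTop :=
      (tendsto_pow_atTop (two_ne_zero)).comp hn
    have := (hp.const_mul_atTop (by norm_num : (0:ℝ) < 18)).inv_tendsto_atTop
    simpa [Pi.inv_def, one_div, mul_inv, mul_comm] using this
  have T2 : Tendsto (fun n : ℕ => 1 + 1/(3*(n:ℝ)) + 1/(18*(n:ℝ)^2)) atTop (𝓝 1) := by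
    have := ((tendsto_const_nhds (x := (1:ℝ))).add h1).add h2
    simpa using this
  have T3 : Tendsto (fun n : ℕ => Real.log (1 + 1/(3*(n:ℝ)) + 1/(18*(n:ℝ)^2))) atTop (𝓝 0) := by
    have := ((Real.continuousAt_log one_ne_zero).tendsto).comp T2
    simpa [Function.comp_def] using this
  have Tfull : Tendsto (fun n : ℕ =>
      (Real.log (Stirling.stirlingSeq n) - Real.log (Real.sqrt Real.pi))
        - (1/4) * Real.log (1 + 1/(3*(n:ℝ)) + 1/(18*(n:ℝ)^2))) atTop (𝓝 0) := by
    have := T1.sub (T3.const_mul (1/4))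
    simpa using this
  apply Tfull.congr'
  filter_upwards [eventually_ge_atTop 1] with n hn1
  exact (theta_nat_eq hn1).symm

lemma gamma_log_step {y : ℝ} (hy : 0 < y) :
    Real.log (Real.Gamma (y + 1)) = Real.log y + Real.log (Real.Gamma y) := by
  rw [Real.Gamma_add_one hy.ne', Real.log_mul hy.ne' (Real.Gamma_pos_of_pos hy).ne']

set_option maxHeartbeats 1000000 in
lemma theta_floor_bound {x : ℝ} (hx : 1 ≤ x) :
    |Θ x - Θ (⌊x⌋₊ : ℝ)| ≤ 2 / (⌊x⌋₊ : ℝ) := by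
  have hm1 : (1:ℝ) ≤ (⌊x⌋₊ : ℝ) := by
    have : 1 ≤ ⌊x⌋₊ := Nat.le_floor (by exact_mod_cast hx)
    exact_mod_cast this
  have hmx : (⌊x⌋₊ : ℝ) ≤ x := Nat.floor_le (by linarith)
  have hxm : x < (⌊x⌋₊ : ℝ) + 1 := Nat.lt_floor_add_one x
  obtain ⟨m, hm⟩ : ∃ m : ℝ, m = (⌊x⌋₊ : ℝ) := ⟨_, rfl⟩
  rw [← hm] at hm1 hmx hxm ⊢
  have hm0 : (0:ℝ) < m := by linarith
  have hx0 : (0:ℝ) < x := by linarith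
  set f : ℝ → ℝ := Real.log ∘ Real.Gamma with hf
  have hconv := Real.convexOn_log_Gamma
  rw [← hf] at hconv
  have hA : 0 ≤ f (x+1) - f (m+1) - (x-m) * Real.log m ∧
      f (x+1) - f (m+1) - (x-m) * Real.log m ≤ 2 / m := by
    rcases eq_or_lt_of_le hmx with h | h
    · constructor <;> rw [← h] <;> simp <;> positivity
    · have hxm1 : m + 1 < x + 1 := by linarith
      have hslope1 := hconv.slope_mono_adjacent (Set.mem_Ioi.mpr hm0)
        (Set.mem_Ioi.mpr (by linarith : (0:ℝ) < x + 1)) (by linarith : m < m + 1) hxm1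
      have hslope2 := hconv.slope_mono_adjacent (Set.mem_Ioi.mpr (by linarith : (0:ℝ) < m + 1))
        (Set.mem_Ioi.mpr (by linarith : (0:ℝ) < x + 2)) hxm1 (by linarith : x + 1 < x + 2)
      have hstep_m : f (m+1) - f m = Real.log m := by
        simp only [hf, Function.comp_apply]
        rw [gamma_log_step hm0]; ring
      have hstep_x : f (x+2) - f (x+1) = Real.log (x+1) := by
        simp only [hf, Function.comp_apply]
        rw [show x + 2 = (x+1) + 1 by ring, gamma_log_step (by linarith : (0:ℝ) < x+1)]; ring
      rw [show m + 1 - m = (1:ℝ) by ring, div_one, hstep_m] at hslope1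
      rw [show x + 2 - (x+1) = (1:ℝ) by ring, div_one, hstep_x] at hslope2
      have hdpos : (0:ℝ) < x + 1 - (m + 1) := by linarith
      have h1 : Real.log m * (x + 1 - (m+1)) ≤ f (x+1) - f (m+1) :=
        (le_div_iff₀ hdpos).mp hslope1
      have h2 : f (x+1) - f (m+1) ≤ Real.log (x+1) * (x + 1 - (m+1)) :=
        (div_le_iff₀ hdpos).mp hslope2
      have hlogm : 0 ≤ Real.log m := Real.log_nonneg hm1
      have hloggrow : Real.log m ≤ Real.log (x+1) := Real.log_le_log hm0 (by linarith)
      have hlogdiff : Real.log (x+1) - Real.log m ≤ 2/m := by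
        have hpos : (0:ℝ) < (x+1)/m := by positivity
        have hlog := Real.log_le_sub_one_of_pos hpos
        rw [Real.log_div (by linarith) hm0.ne'] at hlog
        have hfrac : (x+1)/m - 1 ≤ 2/m := by
          rw [div_sub_one hm0.ne', div_le_div_iff₀ hm0 hm0]
          nlinarith
        linarith
      constructor
      · nlinarith [h1]
      · nlinarith [h2, hlogdiff, hloggrow]
  have hB : (x - m) ≤ x * Real.log x - m * Real.log m - (x-m) * Real.log m ∧
      x * Real.log x - m * Real.log m - (x-m) * Real.log m ≤ (x-m) + 1/m := by
    have hxx : x * Real.log x - m * Real.log m - (x-m) * Real.log m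
        = x * (Real.log x - Real.log m) := by ring
    rw [hxx, ← Real.log_div hx0.ne' hm0.ne']
    constructor
    · have hlow : 1 - m/x ≤ Real.log (x/m) := by
        have hlog := Real.log_le_sub_one_of_pos (show (0:ℝ) < m/x by positivity)
        have hinv : Real.log (m/x) = - Real.log (x/m) := by
          rw [← Real.log_inv]; congr 1; rw [inv_div]
        rw [hinv] at hlog
        linarith
      have hmul : x * (1 - m/x) ≤ x * Real.log (x/m) :=
        mul_le_mul_of_nonneg_left hlow hx0.le
      have hxl : x * (1 - m/x) = x - m := by field_simp
      linarith
    · have hup := Real.log_le_sub_one_of_pos (show (0:ℝ) < x/m by positivity)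
      have hmul : x * Real.log (x/m) ≤ x * (x/m - 1) :=
        mul_le_mul_of_nonneg_left hup hx0.le
      have hxl : x * (x/m - 1) = x * (x-m) / m := by field_simp
      have h2 : x*(x-m) ≤ (x-m)*m + 1 := by
        nlinarith [mul_nonneg (sub_nonneg.mpr hmx) (by linarith : (0:ℝ) ≤ m + 1 - x)]
      have h3 : ((x-m)*m+1)/m = (x-m)+1/m := by field_simp
      have h4 : x*(x-m)/m ≤ ((x-m)*m+1)/m := by gcongr
      linarith
  have hC : 0 ≤ Real.log (x^2 + x/3 + 1/18) - Real.log (m^2 + m/3 + 1/18) ∧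
      Real.log (x^2 + x/3 + 1/18) - Real.log (m^2 + m/3 + 1/18) ≤ 4/m := by
    have hqm := q0_pos m
    have hqx := q0_pos x
    constructor
    · have : m^2 + m/3 + 1/18 ≤ x^2 + x/3 + 1/18 := by nlinarith
      linarith [Real.log_le_log hqm this]
    · have hratio : (0:ℝ) < (x^2 + x/3 + 1/18)/(m^2 + m/3 + 1/18) := by positivity
      have hlog := Real.log_le_sub_one_of_pos hratio
      rw [Real.log_div hqx.ne' hqm.ne'] at hlog
      have hgap : x^2 + x/3 + 1/18 - (m^2 + m/3 + 1/18) ≤ 2*m + 4/3 := by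
        nlinarith [mul_nonneg (sub_nonneg.mpr hmx) (by linarith : (0:ℝ) ≤ m + 1 - x)]
      have hfrac : (x^2 + x/3 + 1/18)/(m^2 + m/3 + 1/18) - 1 ≤ 4/m := by
        rw [div_sub_one hqm.ne', div_le_div_iff₀ hqm hm0]
        nlinarith [hgap, hm1, hm0, sq_nonneg m]
      linarith
  have hkey : Θ x - Θ m = (f (x+1) - f (m+1) - (x-m) * Real.log m)
      - (x * Real.log x - m * Real.log m - (x-m) * Real.log m - (x-m))
      - (1/4) * (Real.log (x^2 + x/3 + 1/18) - Real.log (m^2 + m/3 + 1/18)) := by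
    simp only [Θ, hf, Function.comp_apply]
    ring
  clear_value f
  rw [hkey, abs_le]
  constructor
  all_goals
    linarith [hA.1, hA.2, hB.1, hB.2, hC.1, hC.2,
      show (4:ℝ)/m = 4*(1/m) from by ring, show (2:ℝ)/m = 2*(1/m) from by ring]

lemma theta_tendsto : Tendsto Θ atTop (𝓝 0) := by
  have hfloor : Tendsto (fun x : ℝ => ⌊x⌋₊) atTop atTop := tendsto_nat_floor_atTop
  have h2n : Tendsto (fun n : ℕ => 2/(n:ℝ)) atTop (𝓝 0) :=
    tendsto_const_div_atTop_nhds_zero_nat 2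
  have hlo : Tendsto (fun x : ℝ => Θ (⌊x⌋₊ : ℝ) - 2/(⌊x⌋₊ : ℝ)) atTop (𝓝 0) := by
    have := (theta_nat_tendsto.sub h2n).comp hfloor
    simpa [Function.comp_def] using this
  have hhi : Tendsto (fun x : ℝ => Θ (⌊x⌋₊ : ℝ) + 2/(⌊x⌋₊ : ℝ)) atTop (𝓝 0) := by
    have := (theta_nat_tendsto.add h2n).comp hfloor
    simpa [Function.comp_def] using this
  apply tendsto_of_tendsto_of_tendsto_of_le_of_le' hlo hhi
  · filter_upwards [eventually_ge_atTop (1:ℝ)] with x hx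
    have := abs_le.mp (theta_floor_bound hx)
    linarith [this.1]
  · filter_upwards [eventually_ge_atTop (1:ℝ)] with x hx
    have := abs_le.mp (theta_floor_bound hx)
    linarith [this.2]


theorem stmt_15 :
    StrictMonoOn Θ (Set.Ioi 0) ∧ Tendsto Θ atTop (nhds 0) := by
  refine ⟨?_, theta_tendsto⟩
  intro x hx y hy hxy
  rw [Set.mem_Ioi] at hx hy
  have hgxy : gg x < gg y := gg_strictMonoOn (Set.mem_Ioi.mpr hx) (Set.mem_Ioi.mpr hy) hxy
  have hDlim : Tendsto (fun N : ℕ => Θ (y + N) - Θ (x + N)) atTop (𝓝 0) := by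
    have hy' : Tendsto (fun N : ℕ => y + (N:ℝ)) atTop atTop :=
      tendsto_atTop_add_const_left _ y tendsto_natCast_atTop_atTop
    have hx' : Tendsto (fun N : ℕ => x + (N:ℝ)) atTop atTop :=
      tendsto_atTop_add_const_left _ x tendsto_natCast_atTop_atTop
    have := (theta_tendsto.comp hy').sub (theta_tendsto.comp hx')
    simpa using this
  have hev : ∀ N : ℕ, 1 ≤ N → Θ (y + N) - Θ (x + N) ≤ Θ y - Θ x - (gg y - gg x) := by
    intro N hN
    have hsx := theta_sum hx N
    have hsy := theta_sum hy N
    have hsum : gg y - gg x ≤ ∑ n ∈ Finset.range N, (gg (y + n) - gg (x + n)) := by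
      have h0 : (0:ℕ) ∈ Finset.range N := Finset.mem_range.mpr hN
      have := Finset.single_le_sum (f := fun n : ℕ => gg (y + n) - gg (x + n))
        (fun n _ => by
          have hxn : (0:ℝ) < x + n := by positivity
          have hyn : (0:ℝ) < y + n := by positivity
          have := gg_strictMonoOn (Set.mem_Ioi.mpr hxn) (Set.mem_Ioi.mpr hyn)
            (by linarith : x + (n:ℝ) < y + n)
          show (0:ℝ) ≤ gg (y + n) - gg (x + n)
          linarith) h0
      simpa using this
    rw [Finset.sum_sub_distrib] at hsum
    linarith
  have hfinal : 0 ≤ Θ y - Θ x - (gg y - gg x) := by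
    apply le_of_tendsto hDlim
    filter_upwards [eventually_ge_atTop 1] with N hN
    exact hev N hN
  linarith
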